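/- arXiv:2303.06320 — 4 statements merged into one kernel-verified Lean document; each statement's English description precedes it below -/
import Mathlib

section
/- If a nonempty set B ⊆ ℤ^V satisfies (BS-EXC), then B satisfies (Δ-EXC). That is, if for every p, q ∈ B there exist α₁,…,α_k ∈ Φ_B(p,q) with p + (1/2)·Σᵢ αᵢ = q, then for every p, q ∈ B and every u ∈ supp(q − p), there exists α ∈ Φ_B(p,q) with u ∈ supp(α). -/
open Finset

/-- 1-norm of an integer vector. -/
def normOne {V : Type*} [Fintype V] (t : V → ℤ) : ℤ := ∑ u, |t u|

/-- Membership in the discrete cube `{-1,0,1}^V`. -/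
def InCube {V : Type*} (x : V → ℤ) : Prop := ∀ u, x u = -1 ∨ x u = 0 ∨ x u = 1

/-- `Φ`: vectors in `{-1,0,1}^V` with 1-norm 1 or 2. -/
def InPhi {V : Type*} [Fintype V] (α : V → ℤ) : Prop :=
  InCube α ∧ (normOne α = 1 ∨ normOne α = 2)

/-- `Φ(p,q)`. -/
def InPhiPQ {V : Type*} [Fintype V] (p q α : V → ℤ) : Prop :=
  InPhi α ∧ normOne (q - (p + α)) = normOne (q - p) - normOne α

/-- `Φ_B(p,q)`. -/
def InPhiB {V : Type*} [Fintype V] (B : Set (V → ℤ)) (p q α : V → ℤ) : Prop :=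
  InPhiPQ p q α ∧ p + α ∈ B

/-- The exchange axiom (Δ-EXC). -/
def DeltaEXC {V : Type*} [Fintype V] (B : Set (V → ℤ)) : Prop :=
  ∀ p ∈ B, ∀ q ∈ B, ∀ u : V, q u ≠ p u → ∃ α, InPhiB B p q α ∧ α u ≠ 0

theorem stmt3 {V : Type*} [Fintype V] [Nonempty V]
    (B : Set (V → ℤ)) (hne : B.Nonempty)
    (hbs : ∀ p ∈ B, ∀ q ∈ B, ∃ L : List (V → ℤ),
      (∀ α ∈ L, InPhiB B p q α) ∧ L.sum = (2 : ℤ) • (q - p)) :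
    DeltaEXC B := by
  intro p hp q hq u hu
  obtain ⟨L, hL, hsum⟩ := hbs p hp q hq
  by_contra h
  push_neg at h
  have hall : ∀ α ∈ L, α u = 0 := by
    intro α hα
    by_contra h0
    exact h0 (h α (hL α hα))
  have hzero : ∀ M : List (V → ℤ), (∀ α ∈ M, α u = 0) → M.sum u = 0 := by
    intro M
    induction M with
    | nil => intro _; simp
    | cons a t ih =>
        intro hm
        have : (a :: t).sum = a + t.sum := List.sum_cons
        rw [this]
        have := ih (fun α hα => hm α (List.mem_cons_of_mem a hα))
        simp [Pi.add_apply, this, hm a List.mem_cons_self]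
  have h1 : L.sum u = 0 := hzero L hall
  rw [hsum] at h1
  simp only [Pi.smul_apply, Pi.sub_apply, smul_eq_mul] at h1
  omega
end

section
/- Lemma 4 (exchange lemma): Let B ⊆ ℤ^V satisfy (Δ-EXC), and let q, r ∈ B with q ≠ r. Then there exist α₁,…,α_k ∈ Φ_B(q, r) and β₁,…,β_l ∈ Φ_B(r, q) such that Σᵢ αᵢ + Σⱼ βⱼ = 0. -/
open Finset

set_option linter.unusedSectionVars false

namespace Stmt11Aux

variable {V : Type*} [Fintype V]





def dotQ (w x : V → ℚ) : ℚ := ∑ u, w u * x u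

lemma dotQ_add_right (w x y : V → ℚ) : dotQ w (x + y) = dotQ w x + dotQ w y := by
  simp [dotQ, mul_add, Finset.sum_add_distrib]

lemma dotQ_sub_right (w x y : V → ℚ) : dotQ w (x - y) = dotQ w x - dotQ w y := by
  simp [dotQ, mul_sub, Finset.sum_sub_distrib]

lemma dotQ_smul_right (w : V → ℚ) (t : ℚ) (x : V → ℚ) : dotQ w (t • x) = t * dotQ w x := by
  simp only [dotQ, Finset.mul_sum]
  apply Finset.sum_congr rfl; intro u _
  simp [Pi.smul_apply]; ring

lemma dotQ_sub_left (w x y : V → ℚ) : dotQ (w - x) y = dotQ w y - dotQ x y := by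
  simp [dotQ, sub_mul, Finset.sum_sub_distrib]

lemma dotQ_smul_left (t : ℚ) (w x : V → ℚ) : dotQ (t • w) x = t * dotQ w x := by
  simp only [dotQ, Finset.mul_sum]
  apply Finset.sum_congr rfl; intro u _
  simp [Pi.smul_apply]; ring

lemma dotQ_neg_left (x y : V → ℚ) : dotQ (-x) y = - dotQ x y := by
  simp [dotQ]

lemma dotQ_zero_right (w : V → ℚ) : dotQ w 0 = 0 := by simp [dotQ]

lemma dotQ_self_pos {x : V → ℚ} (hx : x ≠ 0) : 0 < dotQ x x := by
  have h : ∀ u ∈ Finset.univ, (0:ℚ) ≤ x u * x u := fun u _ => mul_self_nonneg _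
  obtain ⟨u, hu⟩ : ∃ u, x u ≠ 0 := by
    by_contra hc; push_neg at hc; exact hx (funext hc)
  exact Finset.sum_pos' h ⟨u, Finset.mem_univ u, mul_self_pos.mpr hu⟩

def InConeL : List (V → ℚ) → (V → ℚ) → Prop
  | [], x => x = 0
  | a :: S, x => ∃ t : ℚ, 0 ≤ t ∧ InConeL S (x - t • a)

lemma inConeL_of_proj (w' a : V → ℚ) (ha : dotQ w' a < 0) :
    ∀ (S : List (V → ℚ)), (∀ b ∈ S, 0 ≤ dotQ w' b) → ∀ x : V → ℚ, dotQ w' x < 0 →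
    InConeL (S.map (fun y => y - (dotQ w' y / dotQ w' a) • a))
      (x - (dotQ w' x / dotQ w' a) • a) →
    InConeL (a :: S) x := by
  intro S
  induction S with
  | nil =>
    intro _ x hx h
    refine ⟨dotQ w' x / dotQ w' a, ?_, ?_⟩
    · exact le_of_lt (div_pos_of_neg_of_neg hx ha)
    · exact h
  | cons b S' ih =>
    intro hbS x hx h
    obtain ⟨t, ht, h2⟩ := h
    have hdb : 0 ≤ dotQ w' b := hbS b List.mem_cons_self
    have hkey : (x - (dotQ w' x / dotQ w' a) • a) - t • (b - (dotQ w' b / dotQ w' a) • a)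
        = (x - t • b) - (dotQ w' (x - t • b) / dotQ w' a) • a := by
      rw [dotQ_sub_right, dotQ_smul_right]
      have : (dotQ w' x - t * dotQ w' b) / dotQ w' a
          = dotQ w' x / dotQ w' a - t * (dotQ w' b / dotQ w' a) := by
        rw [sub_div, mul_div_assoc]
      rw [this]
      ext u
      simp [Pi.smul_apply, smul_eq_mul]
      ring
    rw [hkey] at h2
    have hx' : dotQ w' (x - t • b) < 0 := by
      rw [dotQ_sub_right, dotQ_smul_right]
      have : 0 ≤ t * dotQ w' b := mul_nonneg ht hdb
      linarith
    have := ih (fun c hc => hbS c (List.mem_cons_of_mem _ hc)) (x - t • b) hx' h2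
    obtain ⟨t0, ht0, h3⟩ := this
    refine ⟨t0, ht0, t, ht, ?_⟩
    have : x - t0 • a - t • b = x - t • b - t0 • a := by ext u; simp; ring
    rw [this]
    exact h3

theorem farkasAux : ∀ (n : ℕ) (S : List (V → ℚ)), S.length ≤ n → ∀ (x : V → ℚ),
    InConeL S x ∨ ∃ w : V → ℚ, (∀ a ∈ S, 0 ≤ dotQ w a) ∧ dotQ w x < 0 := by
  intro n
  induction n with
  | zero =>
    intro S hS x
    have hSnil : S = [] := List.length_eq_zero_iff.mp (Nat.le_zero.mp hS)
    subst hSnil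
    by_cases hx : x = 0
    · exact Or.inl hx
    · refine Or.inr ⟨-x, by simp, ?_⟩
      rw [dotQ_neg_left]
      simpa using dotQ_self_pos hx
  | succ n ih =>
    intro S hS x
    match S with
    | [] =>
      by_cases hx : x = 0
      · exact Or.inl hx
      · refine Or.inr ⟨-x, by simp, ?_⟩
        rw [dotQ_neg_left]
        simpa using dotQ_self_pos hx
    | a :: S' =>
      have hS' : S'.length ≤ n := by
        have := hS
        simp only [List.length_cons] at this
        omega
      rcases ih S' hS' x with h | ⟨w', hw'S, hw'x⟩
      · exact Or.inl ⟨0, le_refl 0, by simpa using h⟩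
      · by_cases ha : 0 ≤ dotQ w' a
        · refine Or.inr ⟨w', ?_, hw'x⟩
          intro b hb
          rcases List.mem_cons.mp hb with rfl | hb'
          · exact ha
          · exact hw'S b hb'
        · push_neg at ha
          have hane : dotQ w' a ≠ 0 := ne_of_lt ha
          have hlen : (S'.map (fun y => y - (dotQ w' y / dotQ w' a) • a)).length ≤ n := by
            simpa using hS'
          rcases ih (S'.map (fun y => y - (dotQ w' y / dotQ w' a) • a)) hlen
              (x - (dotQ w' x / dotQ w' a) • a) with h | ⟨u, huS, hux⟩
          · exact Or.inl (inConeL_of_proj w' a ha S' hw'S x hw'x h)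
          · refine Or.inr ⟨u - (dotQ u a / dotQ w' a) • w', ?_, ?_⟩
            · intro b hb
              have hcalc : ∀ y : V → ℚ, dotQ (u - (dotQ u a / dotQ w' a) • w') y
                  = dotQ u (y - (dotQ w' y / dotQ w' a) • a) := by
                intro y
                rw [dotQ_sub_left, dotQ_smul_left, dotQ_sub_right, dotQ_smul_right]
                field_simp
              have h0 : a - (dotQ w' a / dotQ w' a) • a = 0 := by
                rw [div_self hane, one_smul, sub_self]
              rcases List.mem_cons.mp hb with hba | hb'
              · rw [hcalc, hba, h0, dotQ_zero_right]
              · rw [hcalc]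
                exact huS _ (List.mem_map_of_mem hb')
            · have hcalc : dotQ (u - (dotQ u a / dotQ w' a) • w') x
                  = dotQ u (x - (dotQ w' x / dotQ w' a) • a) := by
                rw [dotQ_sub_left, dotQ_smul_left, dotQ_sub_right, dotQ_smul_right]
                field_simp
              rw [hcalc]
              exact hux


def castQ (x : V → ℤ) : V → ℚ := fun u => (x u : ℚ)

lemma castQ_zero : castQ (0 : V → ℤ) = 0 := by funext u; simp [castQ]

lemma castQ_listSum (L : List (V → ℤ)) : castQ L.sum = (L.map castQ).sum := by
  induction L with
  | nil => simp only [List.sum_nil, List.map_nil]; exact castQ_zero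
  | cons a L ih =>
    simp only [List.sum_cons, List.map_cons]
    funext u
    simp only [castQ, Pi.add_apply, Int.cast_add]
    have := congrFun ih u
    simp only [castQ] at this
    simp [this]

lemma clearDenoms : ∀ (S : List (V → ℤ)) (y : V → ℚ), InConeL (S.map castQ) y →
    ∃ c : ℕ, 0 < c ∧ ∃ L : List (V → ℤ), (∀ γ ∈ L, γ ∈ S) ∧ castQ L.sum = (c : ℚ) • y := by
  intro S
  induction S with
  | nil =>
    intro y hy
    have hy0 : y = 0 := hy
    exact ⟨1, Nat.one_pos, [], by simp, by simp [hy0, castQ_zero]⟩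
  | cons a S ih =>
    intro y hy
    obtain ⟨t, ht, h⟩ := hy
    obtain ⟨c', hc', L', hmem', hsum'⟩ := ih _ h
    set d : ℕ := t.den with hd
    set p : ℕ := t.num.toNat with hp
    have hdpos : 0 < d := t.pos
    have hpt : (p : ℚ) = t * (d : ℚ) := by
      have h1 : (t.num.toNat : ℤ) = t.num := Int.toNat_of_nonneg (Rat.num_nonneg.mpr ht)
      have h2 : t * (t.den : ℚ) = (t.num : ℚ) := by
        rw [Rat.mul_den_eq_num]
      rw [hp, hd]
      rw [h2]
      exact_mod_cast congrArg (fun z : ℤ => (z : ℚ)) h1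
    refine ⟨c' * d, Nat.mul_pos hc' hdpos,
      (List.replicate (c' * p) a) ++ (List.replicate d L').flatten, ?_, ?_⟩
    · intro γ hγ
      rcases List.mem_append.mp hγ with hh | hh
      · rw [List.eq_of_mem_replicate hh]; exact List.mem_cons_self
      · obtain ⟨l, hl, hγl⟩ := List.mem_flatten.mp hh
        rw [List.eq_of_mem_replicate hl] at hγl
        exact List.mem_cons_of_mem _ (hmem' γ hγl)
    · have hsum : ((List.replicate (c' * p) a) ++ (List.replicate d L').flatten).sum
          = (c' * p) • a + d • L'.sum := by
        rw [List.sum_append, List.sum_replicate, List.sum_flatten]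
        congr 1
        rw [List.map_replicate, List.sum_replicate]
      rw [hsum]
      funext u
      have hL' := congrFun hsum' u
      simp only [castQ, Pi.smul_apply, smul_eq_mul, Pi.add_apply, Pi.sub_apply] at hL' ⊢
      simp only [nsmul_eq_mul]
      push_cast
      linear_combination ((c':ℚ) * ((a u : ℤ):ℚ)) * hpt + ((d:ℚ)) * hL'





/-- `Conf d α` : each coordinate of `α` points "toward" `d` (within it). -/
def Conf (d α : V → ℤ) : Prop := ∀ u, α u = 0 ∨ 1 ≤ α u * d u

lemma abs_ite (z : ℤ) : |z| = if 0 ≤ z then z else -z := by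
  rcases le_or_gt 0 z with h | h
  · rw [abs_of_nonneg h, if_pos h]
  · rw [abs_of_neg h, if_neg (not_le.mpr h)]

lemma abs_step {d a : ℤ} (ha : a = -1 ∨ a = 0 ∨ a = 1) :
    |d - a| = |d| - |a| ↔ (a = 0 ∨ 1 ≤ a * d) := by
  have h1 := abs_ite d
  have h2 := abs_ite (d - a)
  have h3 := abs_ite a
  rw [h2, h1, h3]
  rcases ha with rfl | rfl | rfl <;>
    simp only [zero_mul, one_mul, neg_one_mul, sub_zero, sub_neg_eq_add] <;> split_ifs <;>
    (try simp only [neg_neg, false_or, true_or, iff_true, true_iff, false_iff, iff_false]) <;> omega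

lemma normOne_nonneg (t : V → ℤ) : 0 ≤ normOne t :=
  Finset.sum_nonneg fun u _ => abs_nonneg _

lemma normOne_eq_zero {t : V → ℤ} (h : normOne t = 0) : t = 0 := by
  funext u
  have := (Finset.sum_eq_zero_iff_of_nonneg (fun u _ => abs_nonneg (t u))).mp h u (mem_univ u)
  simpa using abs_eq_zero.mp this

lemma normOne_sub_comm (x y : V → ℤ) : normOne (x - y) = normOne (y - x) := by
  unfold normOne
  apply Finset.sum_congr rfl
  intro u _
  simpa using (abs_sub_comm (x u) (y u))

/-- pointwise characterization of the `Φ(p,q)` norm equation. -/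
lemma phiPQ_iff_conf {p q α : V → ℤ} (hc : InCube α) :
    normOne (q - (p + α)) = normOne (q - p) - normOne α ↔ Conf (q - p) α := by
  unfold normOne
  rw [← Finset.sum_sub_distrib]
  simp only [Pi.sub_apply, Pi.add_apply]
  have hle : ∀ u ∈ Finset.univ, |q u - p u| - |α u| ≤ |q u - (p u + α u)| := by
    intro u _
    have h := abs_sub_abs_le_abs_sub (q u - p u) (α u)
    have : q u - p u - α u = q u - (p u + α u) := by ring
    rwa [this] at h
  rw [eq_comm, Finset.sum_eq_sum_iff_of_le hle]
  unfold Conf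
  simp only [Pi.sub_apply]
  constructor
  · intro H u
    have h := H u (mem_univ u)
    have h2 : q u - p u - α u = q u - (p u + α u) := by ring
    rw [← h2] at h
    exact (abs_step (hc u)).mp h.symm
  · intro H u _
    have h := (abs_step (hc u)).mpr (H u)
    have h2 : q u - p u - α u = q u - (p u + α u) := by ring
    rw [h2] at h
    exact h.symm

/-- transitivity: a step conformal to `r₁ - q` (where `r₁ = r + β`, `β` conformal to `q - r`)
is conformal to `r - q`. -/
lemma conf_step {a b x : ℤ} (ha : a = -1 ∨ a = 0 ∨ a = 1) (hb : b = -1 ∨ b = 0 ∨ b = 1)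
    (hβ : b = 0 ∨ 1 ≤ b * (-x)) (hα : 1 ≤ a * (x + b)) : 1 ≤ a * x := by
  rcases ha with rfl|rfl|rfl <;> rcases hb with rfl|rfl|rfl <;>
    simp only [neg_one_mul, one_mul, zero_mul, mul_neg, neg_neg, le_neg] at * <;> omega

lemma conf_trans {q r β α : V → ℤ} (hcα : InCube α) (hcβ : InCube β)
    (hβ : Conf (q - r) β) (hα : Conf ((r + β) - q) α) : Conf (r - q) α := by
  intro u
  rcases hα u with h | h
  · exact Or.inl h
  · right
    have hb : β u = 0 ∨ 1 ≤ β u * (-(r u - q u)) := by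
      rcases hβ u with h3 | h3
      · exact Or.inl h3
      · right
        simp only [Pi.sub_apply] at h3
        have : q u - r u = -(r u - q u) := by ring
        rwa [this] at h3
    have hax : 1 ≤ α u * ((r u - q u) + β u) := by
      simp only [Pi.sub_apply, Pi.add_apply] at h
      have : r u + β u - q u = (r u - q u) + β u := by ring
      rwa [this] at h
    simp only [Pi.sub_apply]
    exact conf_step (hcα u) (hcβ u) hb hax


section DotFormula

variable (w : V → ℚ) (q r : V → ℤ)

/-- the signed weight relative to direction `r - q`. -/
def gw : V → ℚ := fun u => if 0 < r u - q u then w u else -w u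

lemma suppT_subset {α : V → ℤ} (hconf : Conf (r - q) α) :
    (univ.filter (fun u => α u ≠ 0)) ⊆ (univ.filter (fun u => r u ≠ q u)) := by
  intro u hu
  simp only [mem_filter, mem_univ, true_and] at hu ⊢
  rcases hconf u with h | h
  · exact absurd h hu
  · intro hrq
    have : r u - q u = 0 := by omega
    rw [Pi.sub_apply, this, mul_zero] at h
    omega

lemma card_suppT {α : V → ℤ} (hphi : InPhi α) :
    (univ.filter (fun u => α u ≠ 0)).card = 1 ∨ (univ.filter (fun u => α u ≠ 0)).card = 2 := by
  have hsum : normOne α = ((univ.filter (fun u => α u ≠ 0)).card : ℤ) := by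
    unfold normOne
    rw [← Finset.sum_subset (Finset.subset_univ (univ.filter (fun u => α u ≠ 0)))
      (by intro u _ hu; simp only [mem_filter, mem_univ, true_and, not_not] at hu
          simp [hu])]
    rw [Finset.card_eq_sum_ones]
    push_cast
    apply Finset.sum_congr rfl
    intro u hu
    simp only [mem_filter] at hu
    rcases hphi.1 u with h | h | h <;> simp [h] at hu ⊢
  rcases hphi.2 with h | h <;> rw [hsum] at h
  · left; exact_mod_cast h
  · right; exact_mod_cast h

/-- dot product with a step conformal to `r - q` equals the sum of `gw` over its support. -/
lemma dot_conf_eq {α : V → ℤ} (hcube : InCube α) (hconf : Conf (r - q) α) :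
    dotQ w (castQ α) = ∑ u ∈ univ.filter (fun u => α u ≠ 0), gw w q r u := by
  unfold dotQ castQ
  rw [← Finset.sum_subset (Finset.subset_univ (univ.filter (fun u => α u ≠ 0)))
    (by intro u _ hu; simp only [mem_filter, mem_univ, true_and, not_not] at hu
        simp [hu])]
  apply Finset.sum_congr rfl
  intro u hu
  simp only [mem_filter, mem_univ, true_and] at hu
  rcases hconf u with h | h
  · exact absurd h hu
  · unfold gw
    simp only [Pi.sub_apply] at h
    rcases hcube u with h1 | h1 | h1
    · rw [h1]
      have : ¬ (0 < r u - q u) := by rw [h1] at h; omega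
      rw [if_neg this]
      push_cast; ring
    · exact absurd h1 hu
    · rw [h1]
      have : 0 < r u - q u := by rw [h1] at h; omega
      rw [if_pos this]
      push_cast; ring

/-- dot product with a step conformal to `q - r` equals minus the sum of `gw`. -/
lemma dot_conf_eq_neg {β : V → ℤ} (hcube : InCube β) (hconf : Conf (q - r) β) :
    dotQ w (castQ β) = - ∑ u ∈ univ.filter (fun u => β u ≠ 0), gw w q r u := by
  unfold dotQ castQ
  rw [← Finset.sum_subset (Finset.subset_univ (univ.filter (fun u => β u ≠ 0)))
    (by intro u _ hu; simp only [mem_filter, mem_univ, true_and, not_not] at hu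
        simp [hu])]
  rw [← Finset.sum_neg_distrib]
  apply Finset.sum_congr rfl
  intro u hu
  simp only [mem_filter, mem_univ, true_and] at hu
  rcases hconf u with h | h
  · exact absurd h hu
  · unfold gw
    simp only [Pi.sub_apply] at h
    rcases hcube u with h1 | h1 | h1
    · rw [h1]
      have : (0 : ℤ) < r u - q u := by rw [h1] at h; omega
      rw [if_pos this]
      push_cast; ring
    · exact absurd h1 hu
    · rw [h1]
      have : ¬ (0:ℤ) < r u - q u := by rw [h1] at h; omega
      rw [if_neg this]
      push_cast; ring

end DotFormula




variable {V : Type*} [Fintype V]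

lemma castQ_addf (x y : V → ℤ) : castQ (x + y) = castQ x + castQ y := by
  funext u; simp [castQ]

lemma dotQ_neg_right (w y : V → ℚ) : dotQ w (-y) = - dotQ w y := by
  simp [dotQ, mul_neg, Finset.sum_neg_distrib]

lemma castQ_negf (x : V → ℤ) : castQ (-x) = - castQ x := by
  funext u; simp [castQ]

theorem dualLemma (B : Set (V → ℤ)) (hB : DeltaEXC B) :
    ∀ n : ℕ, ∀ q ∈ B, ∀ r ∈ B, (normOne (r - q)).toNat ≤ n →
    ∀ w : V → ℚ, (∀ α, InPhiB B q r α → 0 ≤ dotQ w (castQ α)) →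
    0 ≤ dotQ w (castQ (r - q)) := by
  classical
  intro n
  induction n with
  | zero =>
    intro q _ r _ hn w _
    have h0 : normOne (r - q) = 0 := by
      have h1 := normOne_nonneg (r - q)
      omega
    rw [normOne_eq_zero h0, castQ_zero, dotQ_zero_right]
  | succ n ih =>
    intro q hq r hr hn w hw
    by_contra hneg
    push_neg at hneg
    set ε : ℚ := - dotQ w (castQ (r - q)) with hε
    have hεpos : 0 < ε := by simp only [hε]; linarith
    have hne : ∃ u, r u ≠ q u := by
      by_contra hc
      push_neg at hc
      have hz : r - q = 0 := funext fun u => by simp [hc u]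
      rw [hz, castQ_zero, dotQ_zero_right] at hneg
      exact lt_irrefl 0 hneg
    have hsne : (univ.filter (fun u => r u ≠ q u)).Nonempty :=
      ⟨hne.choose, by simp [hne.choose_spec]⟩
    obtain ⟨v, hvs, hvmax⟩ := Finset.exists_max_image (univ.filter (fun u => r u ≠ q u))
      (gw w q r) hsne
    -- extract conformality data from a Φ_B(q,r) element
    have confOf : ∀ {α : V → ℤ}, InPhiB B q r α → Conf (r - q) α := by
      intro α hα
      exact (phiPQ_iff_conf hα.1.1.1).mp hα.1.2
    have confOfR : ∀ {β : V → ℤ}, InPhiB B r q β → Conf (q - r) β := by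
      intro β hβ
      exact (phiPQ_iff_conf hβ.1.1.1).mp hβ.1.2
    rcases lt_or_ge (gw w q r v) 0 with hM | hM
    · -- all weights on s are negative: any exchange step has negative dot
      obtain ⟨u₀, hu₀⟩ := hne
      obtain ⟨α, hαB, hαu⟩ := hB q hq r hr u₀ hu₀
      have h1 := hw α hαB
      rw [dot_conf_eq w q r hαB.1.1.1 (confOf hαB)] at h1
      have hTsub := suppT_subset q r (confOf hαB)
      have hTne : (univ.filter (fun u => α u ≠ 0)).Nonempty := ⟨u₀, by simp [hαu]⟩
      have hsum : ∑ u ∈ univ.filter (fun u => α u ≠ 0), gw w q r u < 0 := by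
        have := Finset.sum_lt_sum_of_nonempty hTne
          (f := gw w q r) (g := fun _ => (0:ℚ)) ?_
        · simpa using this
        · intro i hi
          exact lt_of_le_of_lt (hvmax i (hTsub hi)) hM
      linarith
    · -- M ≥ 0
      have h2p : ∀ β, InPhiB B r q β → ε ≤ dotQ w (castQ β) := by
        intro β hβ
        have hr₁ : r + β ∈ B := hβ.2
        by_cases hq₁ : r + β = q
        · have hβval : β = q - r := by
            funext u
            have := congrFun hq₁ u
            simp only [Pi.add_apply, Pi.sub_apply] at this ⊢
            omega
          rw [hβval]
          have hcst : castQ (q - r) = - castQ (r - q) := by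
            funext u
            simp only [castQ, Pi.neg_apply, Pi.sub_apply]
            push_cast
            ring
          rw [hcst, dotQ_neg_right]
        · -- apply IH to (q, r+β)
          have hnorm : normOne ((r + β) - q) = normOne (r - q) - normOne β := by
            have h2 := hβ.1.2
            calc normOne ((r + β) - q) = normOne (q - (r + β)) := normOne_sub_comm _ _
            _ = normOne (q - r) - normOne β := h2
            _ = normOne (r - q) - normOne β := by rw [normOne_sub_comm q r]
          have hβpos : 1 ≤ normOne β := by rcases hβ.1.1.2 with h | h <;> omega
          have hmeas : (normOne ((r + β) - q)).toNat ≤ n := by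
            have h1 := normOne_nonneg ((r + β) - q)
            have h2 := normOne_nonneg (r - q)
            omega
          have hlift : ∀ α, InPhiB B q (r + β) α → InPhiB B q r α := by
            intro α hα
            obtain ⟨⟨hphi, hnorm'⟩, hmem⟩ := hα
            refine ⟨⟨hphi, ?_⟩, hmem⟩
            rw [phiPQ_iff_conf hphi.1] at hnorm' ⊢
            exact conf_trans hphi.1 hβ.1.1.1 (confOfR hβ) hnorm'
          have hIH := ih q hq (r + β) hr₁ hmeas w (fun α hα => hw α (hlift α hα))
          have hexp : castQ ((r + β) - q) = castQ (r - q) + castQ β := by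
            funext u
            simp only [castQ, Pi.add_apply, Pi.sub_apply]
            push_cast
            ring
          rw [hexp, dotQ_add_right] at hIH
          simp only [hε]
          linarith
      -- Δ-EXC at r toward q in coordinate v
      have hvne : q v ≠ r v := by
        simp only [mem_filter, mem_univ, true_and] at hvs
        exact fun hcc => hvs hcc.symm
      obtain ⟨β, hβB, hβv⟩ := hB r hr q hq v hvne
      have hβdot := h2p β hβB
      rw [dot_conf_eq_neg w q r hβB.1.1.1 (confOfR hβB)] at hβdot
      have hTβsub : (univ.filter (fun u => β u ≠ 0)) ⊆ (univ.filter (fun u => r u ≠ q u)) := by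
        intro u hu
        simp only [mem_filter, mem_univ, true_and] at hu ⊢
        rcases (confOfR hβB) u with h | h
        · exact absurd h hu
        · intro hrq
          have : q u - r u = 0 := by omega
          rw [Pi.sub_apply, this, mul_zero] at h
          omega
      have hvT : v ∈ univ.filter (fun u => β u ≠ 0) := by simp [hβv]
      -- find v' with small weight
      obtain ⟨v', hv's, hv'⟩ :
          ∃ v', v' ∈ univ.filter (fun u => r u ≠ q u) ∧ gw w q r v' ≤ - gw w q r v - ε := by
        rcases card_suppT hβB.1.1 with hc1 | hc2
        · -- singleton support: contradiction with M ≥ 0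
          exfalso
          obtain ⟨x, hx⟩ := Finset.card_eq_one.mp hc1
          rw [hx] at hβdot hvT
          have : v = x := by simpa using hvT
          subst this
          rw [Finset.sum_singleton] at hβdot
          linarith
        · obtain ⟨x, y, hxy, hxyeq⟩ := Finset.card_eq_two.mp hc2
          rw [hxyeq] at hβdot hvT hTβsub
          rw [Finset.sum_pair hxy] at hβdot
          rcases Finset.mem_insert.mp hvT with rfl | hvy
          · refine ⟨y, hTβsub (by simp), by linarith⟩
          · have : v = y := by simpa using hvy
            subst this
            refine ⟨x, hTβsub (by simp), by linarith⟩
      -- Δ-EXC at q toward r in coordinate v'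
      have hv'ne : r v' ≠ q v' := by
        simpa using hv's
      obtain ⟨α', hα'B, hα'v⟩ := hB q hq r hr v' hv'ne
      have h1 := hw α' hα'B
      rw [dot_conf_eq w q r hα'B.1.1.1 (confOf hα'B)] at h1
      have hTsub := suppT_subset q r (confOf hα'B)
      have hv'T : v' ∈ univ.filter (fun u => α' u ≠ 0) := by simp [hα'v]
      rcases card_suppT hα'B.1.1 with hc1 | hc2
      · obtain ⟨x, hx⟩ := Finset.card_eq_one.mp hc1
        rw [hx] at h1 hv'T
        have : v' = x := by simpa using hv'T
        subst this
        rw [Finset.sum_singleton] at h1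
        linarith
      · obtain ⟨x, y, hxy, hxyeq⟩ := Finset.card_eq_two.mp hc2
        rw [hxyeq] at h1 hv'T hTsub
        rw [Finset.sum_pair hxy] at h1
        have hxM : gw w q r x ≤ gw w q r v := hvmax x (hTsub (by simp))
        have hyM : gw w q r y ≤ gw w q r v := hvmax y (hTsub (by simp))
        rcases Finset.mem_insert.mp hv'T with rfl | hvy
        · linarith
        · have : v' = y := by simpa using hvy
          subst this
          linarith



-- appended to full_pre before `end Stmt11Aux`
lemma phiB_finite (B : Set (V → ℤ)) (q r : V → ℤ) :
    {α : V → ℤ | InPhiB B q r α}.Finite := by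
  classical
  apply Set.Finite.subset (Set.Finite.pi (fun _ : V => Set.finite_Icc (-1 : ℤ) 1))
  intro α hα
  simp only [Set.mem_pi, Set.mem_univ, forall_true_left, Set.mem_Icc]
  intro u
  rcases hα.1.1.1 u with h | h | h <;> rw [h] <;> constructor <;> omega

lemma primalQ (B : Set (V → ℤ)) (hB : DeltaEXC B) (q r : V → ℤ) (hq : q ∈ B) (hr : r ∈ B) :
    ∃ c : ℕ, 0 < c ∧ ∃ L : List (V → ℤ), (∀ γ ∈ L, InPhiB B q r γ) ∧
      castQ L.sum = (c : ℚ) • castQ (r - q) := by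
  classical
  set S : List (V → ℤ) := (phiB_finite B q r).toFinset.toList with hS
  have hmemS : ∀ γ, γ ∈ S ↔ InPhiB B q r γ := by
    intro γ
    rw [hS, Finset.mem_toList, Set.Finite.mem_toFinset]
    rfl
  rcases farkasAux (S.map castQ).length (S.map castQ) le_rfl (castQ (r - q)) with
    hcone | ⟨w, hwS, hwx⟩
  · obtain ⟨c, hc, L, hLmem, hLsum⟩ := clearDenoms S (castQ (r - q)) hcone
    exact ⟨c, hc, L, fun γ hγ => (hmemS γ).mp (hLmem γ hγ), hLsum⟩
  · exfalso
    have hdual := dualLemma B hB (normOne (r - q)).toNat q hq r hr le_rfl w ?_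
    · linarith
    · intro α hα
      exact hwS (castQ α) (List.mem_map_of_mem ((hmemS α).mpr hα))

lemma primalZ (B : Set (V → ℤ)) (hB : DeltaEXC B) (q r : V → ℤ) (hq : q ∈ B) (hr : r ∈ B)
    (hqr : q ≠ r) :
    ∃ c : ℕ, 0 < c ∧ ∃ L : List (V → ℤ), L ≠ [] ∧ (∀ γ ∈ L, InPhiB B q r γ) ∧
      L.sum = (c : ℤ) • (r - q) := by
  obtain ⟨c, hc, L, hmem, hsum⟩ := primalQ B hB q r hq hr
  have hz : L.sum = (c : ℤ) • (r - q) := by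
    funext u
    have hcoord := congrFun hsum u
    simp only [castQ, Pi.smul_apply, smul_eq_mul, Pi.sub_apply] at hcoord ⊢
    exact_mod_cast hcoord
  obtain ⟨u, hu⟩ : ∃ u, r u ≠ q u := by
    by_contra hc2
    push_neg at hc2
    exact hqr (funext fun u => (hc2 u).symm)
  refine ⟨c, hc, L, ?_, hmem, hz⟩
  intro hL0
  rw [hL0] at hz
  have := congrFun hz u
  simp only [List.sum_nil, Pi.zero_apply, Pi.smul_apply, Pi.sub_apply, smul_eq_mul] at this
  have hcne : (c : ℤ) ≠ 0 := by exact_mod_cast Nat.pos_iff_ne_zero.mp hc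
  have : (c : ℤ) * (r u - q u) = 0 := this.symm
  rcases mul_eq_zero.mp this with h | h
  · exact hcne h
  · omega


end Stmt11Aux

-- final theorem (outside namespace)
theorem stmt11 {V : Type*} [Fintype V] [Nonempty V]
    (B : Set (V → ℤ)) (h : DeltaEXC B)
    (q r : V → ℤ) (hq : q ∈ B) (hr : r ∈ B) (hqr : q ≠ r) :
    ∃ (L M : List (V → ℤ)), L ≠ [] ∧ M ≠ [] ∧
      (∀ α ∈ L, InPhiB B q r α) ∧ (∀ β ∈ M, InPhiB B r q β) ∧
      L.sum + M.sum = 0 := by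
  classical
  obtain ⟨c₁, hc₁, L₀, hL0, hLmem, hLsum⟩ := Stmt11Aux.primalZ B h q r hq hr hqr
  obtain ⟨c₂, hc₂, M₀, hM0, hMmem, hMsum⟩ := Stmt11Aux.primalZ B h r q hr hq hqr.symm
  refine ⟨(List.replicate c₂ L₀).flatten, (List.replicate c₁ M₀).flatten, ?_, ?_, ?_, ?_, ?_⟩
  · -- L nonempty
    obtain ⟨k, hk⟩ := Nat.exists_eq_succ_of_ne_zero (Nat.pos_iff_ne_zero.mp hc₂)
    rw [hk]
    simp only [List.replicate_succ, List.flatten_cons]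
    intro hcontra
    exact hL0 (List.append_eq_nil_iff.mp hcontra).1
  · obtain ⟨k, hk⟩ := Nat.exists_eq_succ_of_ne_zero (Nat.pos_iff_ne_zero.mp hc₁)
    rw [hk]
    simp only [List.replicate_succ, List.flatten_cons]
    intro hcontra
    exact hM0 (List.append_eq_nil_iff.mp hcontra).1
  · intro α hα
    obtain ⟨l, hl, hαl⟩ := List.mem_flatten.mp hα
    rw [List.eq_of_mem_replicate hl] at hαl
    exact hLmem α hαl
  · intro β hβ
    obtain ⟨l, hl, hβl⟩ := List.mem_flatten.mp hβ
    rw [List.eq_of_mem_replicate hl] at hβl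
    exact hMmem β hβl
  · have hsumL : (List.replicate c₂ L₀).flatten.sum = ((c₂ * c₁ : ℕ) : ℤ) • (r - q) := by
      rw [List.sum_flatten, List.map_replicate, List.sum_replicate, hLsum]
      rw [← natCast_zsmul, smul_smul]
      push_cast
      ring_nf
    have hsumM : (List.replicate c₁ M₀).flatten.sum = ((c₁ * c₂ : ℕ) : ℤ) • (q - r) := by
      rw [List.sum_flatten, List.map_replicate, List.sum_replicate, hMsum]
      rw [← natCast_zsmul, smul_smul]
      push_cast
      ring_nf
    rw [hsumL, hsumM, Nat.mul_comm c₁ c₂, ← smul_add]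
    have : (r - q) + (q - r) = 0 := by abel
    rw [this, smul_zero]
end

section
/- Lemma 6 (first part): Let B = P(f) ∩ ℤ^V for an integral bisubmodular function f, p ∈ B, and s_u ∈ {±χ_u}, s_v ∈ {±χ_v} for u, v ∈ V. If s_u ∈ Φ_B(p) and −s_u + s_v ∈ Φ_B(p), then s_v ∈ Φ_B(p). Here Φ_B(p) = {α ∈ Φ : p + α ∈ B}, and this may be proved from the characterizations: for s ∈ {±χ_w}, s ∈ Φ_B(p) iff dep(p, s) = 0; and for p + s ∉ B with s = s_u ≠ ±s_v, s + s_v ∈ Φ_B(p) iff −s_v ⪯ dep(p, s). -/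
open Finset

/-- The operation `⊓` on `{-1,0,1}^V`. -/
def sqcap {V : Type*} (x y : V → ℤ) : V → ℤ := fun u => if x u = y u then x u else 0

/-- The operation `⊔` on `{-1,0,1}^V`. -/
def sqcup {V : Type*} (x y : V → ℤ) : V → ℤ := fun u =>
  if x u = y u ∨ y u = 0 then x u else if x u = 0 then y u else 0

/-- `f` is bisubmodular (on the cube, with values in `ℤ ∪ {+∞}`). -/
def Bisubmodular {V : Type*} (f : (V → ℤ) → WithTop ℤ) : Prop :=
  ∀ x y : V → ℤ, InCube x → InCube y →
    f (sqcap x y) + f (sqcup x y) ≤ f x + f y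

/-- Membership of a real vector in the bisubmodular polyhedron `P(f)`. -/
def MemP {V : Type*} [Fintype V] (f : (V → ℤ) → WithTop ℤ) (p : V → ℝ) : Prop :=
  ∀ x : V → ℤ, InCube x → ∀ c : ℤ, f x = (c : WithTop ℤ) →
    ∑ u, p u * (x u : ℝ) ≤ (c : ℝ)

/-- The embedding `ℤ^V → ℝ^V`. -/
def toReal {V : Type*} (p : V → ℤ) : V → ℝ := fun u => (p u : ℝ)

open scoped Classical in
/-- Iterated `⊓` over a set of vectors, with `⊓ ∅ = 0`. -/
noncomputable def bigSqcap {V : Type*} (S : Set (V → ℤ)) : V → ℤ := fun u =>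
  if S.Nonempty ∧ ∀ x ∈ S, x u = 1 then 1
  else if S.Nonempty ∧ ∀ x ∈ S, x u = -1 then -1 else 0

/-- `dep(p, s)` for a signed unit vector `s`. -/
noncomputable def dep {V : Type*} [Fintype V] (f : (V → ℤ) → WithTop ℤ)
    (p s : V → ℤ) : V → ℤ :=
  bigSqcap {x : V → ℤ | InCube x ∧ (∀ w, s w ≠ 0 → x w = s w) ∧
    ((∑ u, p u * x u : ℤ) : WithTop ℤ) = f x}

/-- The partial order `⪯` on `{-1,0,1}^V`. -/
def Preceq {V : Type*} (x y : V → ℤ) : Prop := ∀ u, x u ≠ 0 → y u = x u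

/-- The set of integer points of `P(f)`. -/
def BSet {V : Type*} [Fintype V] (f : (V → ℤ) → WithTop ℤ) : Set (V → ℤ) :=
  {p : V → ℤ | ∀ x : V → ℤ, InCube x → ∀ c : ℤ, f x = (c : WithTop ℤ) →
    ∑ u, p u * x u ≤ c}

theorem stmt12 {V : Type*} [Fintype V] [DecidableEq V] [Nonempty V]
    (f : (V → ℤ) → WithTop ℤ) (hf0 : f 0 = 0) (hf : Bisubmodular f)
    (p : V → ℤ) (hp : p ∈ BSet f)
    (hlem1 : ∀ (w : V) (s : V → ℤ),
      (s = Pi.single w 1 ∨ s = -Pi.single w 1) →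
      (p + s ∈ BSet f ↔ dep f p s = 0))
    (hlem2 : ∀ (w w' : V), w ≠ w' → ∀ s t : V → ℤ,
      (s = Pi.single w 1 ∨ s = -Pi.single w 1) →
      (t = Pi.single w' 1 ∨ t = -Pi.single w' 1) →
      p + s ∉ BSet f → (p + (s + t) ∈ BSet f ↔ Preceq (-t) (dep f p s)))
    (hlem3 : ∀ (w w' : V) (s t : V → ℤ),
      (s = Pi.single w 1 ∨ s = -Pi.single w 1) →
      (t = Pi.single w' 1 ∨ t = -Pi.single w' 1) →
      Preceq s (dep f p t) →
      Preceq s (dep f p s) ∧ Preceq (dep f p s) (dep f p t))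
    (u v : V) (huv : u ≠ v) (su sv : V → ℤ)
    (hsu : su = Pi.single u 1 ∨ su = -Pi.single u 1)
    (hsv : sv = Pi.single v 1 ∨ sv = -Pi.single v 1)
    (h1 : p + su ∈ BSet f) (h2 : p + (-su + sv) ∈ BSet f) :
    p + sv ∈ BSet f := by
  by_contra hpsv
  have hnsu : (-su = Pi.single u 1 ∨ -su = -Pi.single u 1) := by
    rcases hsu with h | h <;> simp [h]
  have h2' : p + (sv + -su) ∈ BSet f := by rwa [add_comm sv (-su)]
  have hpre : Preceq (-(-su)) (dep f p sv) :=
    (hlem2 v u huv.symm sv (-su) hsv hnsu hpsv).mp h2'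
  rw [neg_neg] at hpre
  have h3 := (hlem3 u v su sv hsu hsv hpre).1
  have hdep0 : dep f p su = 0 := (hlem1 u su hsu).mp h1
  rw [hdep0] at h3
  have hsuu : su u ≠ 0 := by rcases hsu with h | h <;> simp [h]
  exact hsuu ((h3 u hsuu).symm.trans rfl)
end

section
/- Lemma 6 (second part): Let B = P(f) ∩ ℤ^V for an integral bisubmodular function f and p ∈ B. If s_u + s_v ∈ Φ_B(p) and −s_v + s_w ∈ Φ_B(p) with s_u ≠ −s_w (for s_u ∈ {±χ_u}, s_v ∈ {±χ_v}, s_w ∈ {±χ_w}), then either s_u + s_w ∈ Φ_B(p), or both s_u ∈ Φ_B(p) and s_w ∈ Φ_B(p). -/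
open Finset

lemma signedVal {V : Type*} [DecidableEq V] {u : V} {s : V → ℤ}
    (hs : s = Pi.single u 1 ∨ s = -Pi.single u 1) : s u = 1 ∨ s u = -1 := by
  rcases hs with h | h <;> simp [h]

lemma depSelf {V : Type*} [Fintype V] [DecidableEq V]
    (f : (V → ℤ) → WithTop ℤ) (p : V → ℤ) (u : V) (s : V → ℤ)
    (hs : s = Pi.single u 1 ∨ s = -Pi.single u 1)
    (h : Preceq (-s) (dep f p s)) : False := by
  have hsu : s u = 1 ∨ s u = -1 := signedVal hs
  have hne : s u ≠ 0 := by rcases hsu with h' | h' <;> omega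
  have hd : dep f p s u = -(s u) := by
    have := h u (by simpa using neg_ne_zero.mpr hne)
    simpa using this
  unfold dep bigSqcap at hd
  split_ifs at hd with h1 h2
  · obtain ⟨⟨x, hx⟩, hall⟩ := h1
    have hxu : x u = s u := hx.2.1 u hne
    have := hall x hx
    omega
  · obtain ⟨⟨x, hx⟩, hall⟩ := h2
    have hxu : x u = s u := hx.2.1 u hne
    have := hall x hx
    omega
  · omega

lemma preceq_trans {V : Type*} {a b c : V → ℤ}
    (h1 : Preceq a b) (h2 : Preceq b c) : Preceq a c := by
  intro x hx
  have hb := h1 x hx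
  have : b x ≠ 0 := by rw [hb]; exact hx
  rw [h2 x this, hb]

lemma eq_of_not_neg {V : Type*} [DecidableEq V] {u : V} {s t : V → ℤ}
    (hs : s = Pi.single u 1 ∨ s = -Pi.single u 1)
    (ht : t = Pi.single u 1 ∨ t = -Pi.single u 1)
    (hne : s ≠ -t) : s = t := by
  rcases hs with h | h <;> rcases ht with h' | h' <;> subst h <;> subst h' <;>
    first
      | rfl
      | exact absurd (neg_neg _).symm hne
      | exact absurd rfl hne

theorem stmt13 {V : Type*} [Fintype V] [DecidableEq V] [Nonempty V]
    (f : (V → ℤ) → WithTop ℤ) (hf0 : f 0 = 0) (hf : Bisubmodular f)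
    (p : V → ℤ) (hp : p ∈ BSet f)
    (hlem1 : ∀ (w : V) (s : V → ℤ),
      (s = Pi.single w 1 ∨ s = -Pi.single w 1) →
      (p + s ∈ BSet f ↔ dep f p s = 0))
    (hlem2 : ∀ (w w' : V), w ≠ w' → ∀ s t : V → ℤ,
      (s = Pi.single w 1 ∨ s = -Pi.single w 1) →
      (t = Pi.single w' 1 ∨ t = -Pi.single w' 1) →
      p + s ∉ BSet f → (p + (s + t) ∈ BSet f ↔ Preceq (-t) (dep f p s)))
    (hlem3 : ∀ (w w' : V) (s t : V → ℤ),
      (s = Pi.single w 1 ∨ s = -Pi.single w 1) →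
      (t = Pi.single w' 1 ∨ t = -Pi.single w' 1) →
      Preceq s (dep f p t) →
      Preceq s (dep f p s) ∧ Preceq (dep f p s) (dep f p t))
    (u v w : V) (huv : u ≠ v) (hvw : v ≠ w)
    (su sv sw : V → ℤ)
    (hsu : su = Pi.single u 1 ∨ su = -Pi.single u 1)
    (hsv : sv = Pi.single v 1 ∨ sv = -Pi.single v 1)
    (hsw : sw = Pi.single w 1 ∨ sw = -Pi.single w 1)
    (hne : su ≠ -sw)
    (h1 : p + (su + sv) ∈ BSet f) (h2 : p + (-sv + sw) ∈ BSet f) :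
    (u ≠ w ∧ p + (su + sw) ∈ BSet f) ∨
      (p + su ∈ BSet f ∧ p + sw ∈ BSet f) := by
  have hnegsv : -sv = Pi.single v 1 ∨ -sv = -Pi.single v 1 := by
    rcases hsv with h | h
    · right; rw [h]
    · left; rw [h, neg_neg]
  have hsvv : sv v = 1 ∨ sv v = -1 := signedVal hsv
  by_cases hPu : p + su ∈ BSet f
  · by_cases hPw : p + sw ∈ BSet f
    · exact Or.inr ⟨hPu, hPw⟩
    · -- p + sw ∉ B
      have h2' : p + (sw + -sv) ∈ BSet f := by rwa [add_comm sw] 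
      have hsvdep : Preceq sv (dep f p sw) := by
        have := (hlem2 w v hvw.symm sw (-sv) hsw hnegsv hPw).mp h2'
        rwa [neg_neg] at this
      obtain ⟨hsv1, hsv2⟩ := hlem3 v w sv sw hsv hsw hsvdep
      have hPv : p + sv ∉ BSet f := by
        intro hmem
        have h0 := (hlem1 v sv hsv).mp hmem
        have hvne : sv v ≠ 0 := by rcases hsvv with h' | h' <;> omega
        have := hsv1 v hvne
        rw [h0] at this
        exact hvne this.symm
      have h1' : p + (sv + su) ∈ BSet f := by rwa [add_comm su sv] at h1
      have hsu' : Preceq (-su) (dep f p sv) :=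
        (hlem2 v u huv.symm sv su hsv hsu hPv).mp h1'
      have hsu'' : Preceq (-su) (dep f p sw) := preceq_trans hsu' hsv2
      have huw : u ≠ w := by
        intro he
        subst he
        have hsuw : su = sw := eq_of_not_neg hsu hsw hne
        rw [← hsuw] at hsu''
        exact depSelf f p u su hsu hsu''
      have := (hlem2 w u huw.symm sw su hsw hsu hPw).mpr hsu''
      exact Or.inl ⟨huw, by rwa [add_comm su sw]⟩
  · -- p + su ∉ B
    have hnsv : Preceq (-sv) (dep f p su) :=
      (hlem2 u v huv su sv hsu hsv hPu).mp h1
    obtain ⟨hnsv1, hnsv2⟩ := hlem3 v u (-sv) su hnegsv hsu hnsv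
    have hPnv : p + (-sv) ∉ BSet f := by
      intro hmem
      have h0 := (hlem1 v (-sv) hnegsv).mp hmem
      have hvne : (-sv) v ≠ 0 := by
        simp only [Pi.neg_apply]
        rcases hsvv with h' | h' <;> omega
      have := hnsv1 v hvne
      rw [h0] at this
      exact hvne this.symm
    have hsw' : Preceq (-sw) (dep f p (-sv)) :=
      (hlem2 v w hvw (-sv) sw hnegsv hsw hPnv).mp h2
    have hsw'' : Preceq (-sw) (dep f p su) := preceq_trans hsw' hnsv2
    have huw : u ≠ w := by
      intro he
      subst he
      have hsuw : su = sw := eq_of_not_neg hsu hsw hne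
      rw [← hsuw] at hsw''
      exact depSelf f p u su hsu hsw''
    exact Or.inl ⟨huw, (hlem2 u w huw su sw hsu hsw hPu).mpr hsw''⟩
end
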